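/- Let R be a 1-dimensional Noetherian local ring with primary decomposition 0 = q_1 ∩ ⋯ ∩ q_s ∩ J, where √q_i = p_i are the distinct minimal primes and √J = m. Let x be a parameter. Then for large n, (x) + (0 : x^n) = (x) + q_1 ∩ ⋯ ∩ q_s. -/

import Mathlib

/-- let `(R,m)` be a 1-dimensional Noetherian local ring with a
primary decomposition `0 = q_1 ∩ ⋯ ∩ q_s ∩ J`, where the `√q_i = p_i` are the
distinct minimal primes and `√J = m`.  If `x` is a parameter, then for all
large `n`, `(x) + (0 : x^n) = (x) + q_1 ∩ ⋯ ∩ q_s`. -/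
theorem stmt12 {R : Type*} [CommRing R] [IsNoetherianRing R] [IsLocalRing R]
    (hdim : ringKrullDim R = 1)
    {s : ℕ} (q : Fin s → Ideal R) (p : Fin s → Ideal R) (J : Ideal R)
    (hprimary : ∀ i, (q i).IsPrimary) (hrad : ∀ i, (q i).radical = p i)
    (hmin : ∀ i, p i ∈ minimalPrimes R)
    (hall : ∀ P ∈ minimalPrimes R, ∃ i, p i = P)
    (hdistinct : Function.Injective p)
    (hJ : J.radical = IsLocalRing.maximalIdeal R)
    (hdecomp : (⊥ : Ideal R) = (⨅ i, q i) ⊓ J)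
    (x : R) (hx : (Ideal.span {x}).radical = IsLocalRing.maximalIdeal R) :
    ∃ N : ℕ, ∀ n : ℕ, N ≤ n →
      Ideal.span {x} ⊔ Submodule.colon (⊥ : Ideal R) (Ideal.span {x ^ n}) =
        Ideal.span {x} ⊔ ⨅ i, q i := by
  -- the maximal ideal is not a minimal prime (since dim = 1)
  have hmnotmin : IsLocalRing.maximalIdeal R ∉ minimalPrimes R := by
    intro hm
    have hsub : Subsingleton (PrimeSpectrum R) := by
      constructor
      intro P Q
      have h1 : ∀ P : PrimeSpectrum R, P.asIdeal = IsLocalRing.maximalIdeal R := by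
        intro P
        have hle : P.asIdeal ≤ IsLocalRing.maximalIdeal R :=
          IsLocalRing.le_maximalIdeal P.isPrime.ne_top
        have := hm.2 ⟨P.isPrime, bot_le⟩ hle
        exact le_antisymm hle this
      ext1
      rw [h1 P, h1 Q]
    have : ringKrullDim R ≤ 0 := Order.krullDim_nonpos_of_subsingleton
    rw [hdim] at this
    norm_num at this
  -- x is not in any p i
  have hxp : ∀ i, x ∉ p i := by
    intro i hxi
    have hle : Ideal.span {x} ≤ p i := (Ideal.span_singleton_le_iff_mem _).mpr hxi
    have h1 : IsLocalRing.maximalIdeal R ≤ p i := by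
      rw [← hx]
      calc (Ideal.span {x}).radical ≤ (p i).radical := Ideal.radical_mono hle
        _ = p i := (hmin i).1.1.radical
    have h2 : p i ≤ IsLocalRing.maximalIdeal R :=
      IsLocalRing.le_maximalIdeal (hmin i).1.1.ne_top
    exact hmnotmin ((le_antisymm h2 h1) ▸ hmin i)
  -- x ^ k ∈ J for some k
  have hxJ : x ∈ J.radical := by
    rw [hJ, ← hx]; exact Ideal.le_radical (Ideal.mem_span_singleton_self x)
  obtain ⟨k, hk⟩ := hxJ
  refine ⟨k, fun n hn => ?_⟩
  have hxnJ : x ^ n ∈ J := by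
    have : x ^ n = x ^ (n - k) * x ^ k := by rw [← pow_add]; congr 1; omega
    rw [this]; exact J.mul_mem_left _ hk
  have key : Submodule.colon (⊥ : Ideal R) (Ideal.span {x ^ n}) = ⨅ i, q i := by
    apply le_antisymm
    · intro a ha
      rw [Submodule.mem_colon] at ha
      have hax : a * x ^ n = 0 := by
        have := ha (x ^ n) (Ideal.mem_span_singleton_self _)
        simpa using this
      rw [Ideal.mem_iInf]
      intro i
      have h0 : a * x ^ n ∈ q i := by rw [hax]; exact (q i).zero_mem
      rcases (Ideal.isPrimary_iff.mp (hprimary i)).2 h0 with h | h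
      · exact h
      · exfalso
        rw [hrad] at h
        exact hxp i (((hmin i).1.1.pow_mem_iff_mem n (by
          rcases Nat.eq_zero_or_pos n with rfl | hn'
          · exfalso
            -- n = 0 case: x^0 = 1 ∈ p i impossible since p i prime
            simp at h
            exact (hmin i).1.1.ne_top (Ideal.eq_top_iff_one _ |>.mpr h)
          · exact hn')).mp h)
    · intro a ha
      rw [Ideal.mem_iInf] at ha
      rw [Submodule.mem_colon]
      intro b hb
      rw [SetLike.mem_coe, Ideal.mem_span_singleton] at hb
      obtain ⟨c, rfl⟩ := hb
      have : a * (x ^ n * c) ∈ (⨅ i, q i) ⊓ J := by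
        refine ⟨?_, ?_⟩
        · show _ ∈ ⨅ i, q i
          rw [Ideal.mem_iInf]; intro i; exact (q i).mul_mem_right _ (ha i)
        · exact J.mul_mem_left _ (J.mul_mem_right _ hxnJ)
      rw [← hdecomp] at this
      simpa using this
  rw [key]
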